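/- arXiv:1308.6812 — 4 statements merged into one kernel-verified Lean document; each statement's English description precedes it below -/
import Mathlib

section
/- For a finite group G and subset S ⊆ G, the Cayley digraph Cay(G,S) is a CI-graph if and only if every two regular subgroups of Aut(Cay(G,S)) that are isomorphic to G are conjugate in Aut(Cay(G,S)). -/
def biCayley (G : Type*) [Group G] (S : Set G) : SimpleGraph (G × Bool) where
  Adj v w := (v.2 = false ∧ w.2 = true ∧ w.1 * v.1⁻¹ ∈ S) ∨
             (v.2 = true ∧ w.2 = false ∧ v.1 * w.1⁻¹ ∈ S)
  symm := ⟨fun v w h => by tauto⟩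
  loopless := ⟨fun v h => by rcases h with ⟨h1,h2,_⟩|⟨h1,h2,_⟩ <;> simp [h1] at h2⟩

def biTrans (G : Type*) [Group G] : G →* Equiv.Perm (G × Bool) where
  toFun g := ⟨fun v => (v.1 * g⁻¹, v.2), fun v => (v.1 * g, v.2),
    fun v => by simp, fun v => by simp⟩
  map_one' := by ext v <;> simp
  map_mul' a b := by ext v <;> simp [mul_assoc]

def graphAut {V : Type*} (Γ : SimpleGraph V) : Subgroup (Equiv.Perm V) where
  carrier := {f | ∀ a b, Γ.Adj a b ↔ Γ.Adj (f a) (f b)}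
  one_mem' := by intro a b; simp
  mul_mem' := by
    intro f g hf hg a b
    exact (hg a b).trans (hf (g a) (g b))
  inv_mem' := by
    intro f hf a b
    simpa using (hf (f⁻¹ a) (f⁻¹ b)).symm

def cayAdj {G : Type*} [Group G] (S : Set G) (x y : G) : Prop := y * x⁻¹ ∈ S

def cayAut (G : Type*) [Group G] (S : Set G) : Subgroup (Equiv.Perm G) where
  carrier := {f | ∀ x y, cayAdj S x y ↔ cayAdj S (f x) (f y)}
  one_mem' := by intro a b; simp
  mul_mem' := by
    intro f g hf hg a b
    exact (hg a b).trans (hf (g a) (g b))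
  inv_mem' := by
    intro f hf a b
    simpa using (hf (f⁻¹ a) (f⁻¹ b)).symm

def cayIso {G : Type*} [Group G] (S T : Set G) : Prop :=
  ∃ e : Equiv.Perm G, ∀ x y, cayAdj S x y ↔ cayAdj T (e x) (e y)

def isCI (G : Type*) [Group G] (S : Set G) : Prop :=
  ∀ T : Set G, cayIso S T → ∃ α : G ≃* G, T = α '' S

section Aux
variable (G : Type*) [Group G]

def rhoCI : G →* Equiv.Perm G where
  toFun g := ⟨fun x => x * g⁻¹, fun x => x * g, fun x => by simp, fun x => by simp⟩
  map_one' := by ext x; simp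
  map_mul' a b := by ext x; simp [mul_assoc]

variable {G}

@[simp] lemma rhoCI_apply (g x : G) : rhoCI G g x = x * g⁻¹ := rfl

lemma rhoCI_injective : Function.Injective (rhoCI G) := by
  intro a b h
  have := congrArg (fun f : Equiv.Perm G => f 1) h
  simpa using this

lemma rhoCI_mem_cayAut (S : Set G) (g : G) : rhoCI G g ∈ cayAut G S := by
  intro x y
  simp [cayAdj, mul_assoc]

lemma mem_cayAut_iff (S : Set G) (f : Equiv.Perm G) :
    f ∈ cayAut G S ↔ ∀ x y, cayAdj S x y ↔ cayAdj S (f x) (f y) := Iff.rfl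

lemma psi_hom (ψ : Equiv.Perm G) (h1 : ψ 1 = 1)
    (hn : ∀ g : G, ∃ g', ψ * rhoCI G g * ψ⁻¹ = rhoCI G g') (a b : G) :
    ψ (a * b) = ψ a * ψ b := by
  obtain ⟨g', hg'⟩ := hn b⁻¹
  have hpt : ∀ x : G, ψ (ψ⁻¹ x * b) = x * g'⁻¹ := by
    intro x
    have := congrArg (fun f : Equiv.Perm G => f x) hg'
    simpa only [Equiv.Perm.mul_apply, rhoCI_apply, inv_inv] using this
  have h1' : ψ⁻¹ (1 : G) = 1 := by
    have := congrArg (fun x => ψ⁻¹ x) h1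
    simpa using this.symm
  have hb : ψ b = g'⁻¹ := by simpa [h1'] using hpt 1
  have := hpt (ψ a)
  simpa [hb] using this

end Aux

lemma regular_conj {G : Type*} [Group G] {S : Set G} (hCI : isCI G S)
    (H : Subgroup (Equiv.Perm G)) (hH : H ≤ cayAut G S)
    (htrans : ∀ x y : G, ∃ h ∈ H, h x = y)
    (hfree : ∀ h ∈ H, (∃ x : G, h x = x) → h = 1)
    (μ : G ≃* H) :
    ∃ f ∈ cayAut G S, H = (rhoCI G).range.map (MulAut.conj f).toMonoidHom := by
  classical
  set e0 : G → G := fun x => ((μ x⁻¹ : H) : Equiv.Perm G) 1 with he0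
  have hkey : ∀ (g x : G), e0 (x * g⁻¹) = ((μ g : H) : Equiv.Perm G) (e0 x) := by
    intro g x
    have : (x * g⁻¹)⁻¹ = g * x⁻¹ := by group
    simp only [he0, this, map_mul, Subgroup.coe_mul, Equiv.Perm.mul_apply]
  have hinj : Function.Injective e0 := by
    intro x y hxy
    have h1 : ((μ (y * x⁻¹) : H) : Equiv.Perm G) 1 = 1 := by
      have hsplit : ((μ (y * x⁻¹) : H) : Equiv.Perm G) 1
          = ((μ y : H) : Equiv.Perm G) (e0 x) := by
        simp only [map_mul, Subgroup.coe_mul, Equiv.Perm.mul_apply]; rfl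
      have hcollapse : ((μ y : H) : Equiv.Perm G) (e0 y)
          = ((μ (y * y⁻¹) : H) : Equiv.Perm G) 1 := by
        simp only [map_mul, Subgroup.coe_mul, Equiv.Perm.mul_apply]; rfl
      rw [hsplit, hxy, hcollapse]; simp
    have h2 : ((μ (y * x⁻¹) : H) : Equiv.Perm G) = 1 :=
      hfree _ (SetLike.coe_mem _) ⟨1, h1⟩
    have h3 : μ (y * x⁻¹) = 1 := by exact_mod_cast Subtype.ext h2
    have h4 : y * x⁻¹ = 1 := by
      have := μ.injective (h3.trans (map_one μ).symm)
      simpa using this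
    have := mul_inv_eq_one.mp h4
    exact this.symm
  have hsurj : Function.Surjective e0 := by
    intro z
    obtain ⟨h, hh, hz⟩ := htrans 1 z
    refine ⟨(μ.symm ⟨h, hh⟩)⁻¹, ?_⟩
    simp only [he0, inv_inv, MulEquiv.apply_symm_apply]
    exact hz
  set e : Equiv.Perm G := Equiv.ofBijective e0 ⟨hinj, hsurj⟩ with he
  have heapp : ∀ x, e x = e0 x := fun x => rfl
  set T : Set G := {z : G | cayAdj S (e0 1) (e0 z)} with hTdef
  have hT : ∀ x y : G, cayAdj T x y ↔ cayAdj S (e0 x) (e0 y) := by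
    intro x y
    have h1 : e0 (x * x⁻¹) = ((μ x : H) : Equiv.Perm G) (e0 x) := hkey x x
    have h2 : e0 (y * x⁻¹) = ((μ x : H) : Equiv.Perm G) (e0 y) := hkey x y
    have : cayAdj T x y ↔ cayAdj S (e0 1) (e0 (y * x⁻¹)) := Iff.rfl
    rw [this, show (1 : G) = x * x⁻¹ by simp, h1, h2]
    exact (hH (SetLike.coe_mem (μ x)) (e0 x) (e0 y)).symm
  have hiso : cayIso S T := by
    refine ⟨e.symm, fun x y => ?_⟩
    have := hT (e.symm x) (e.symm y)
    rw [← heapp, ← heapp, Equiv.apply_symm_apply, Equiv.apply_symm_apply] at this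
    exact this.symm
  obtain ⟨α, hα⟩ := hCI T hiso
  set f : Equiv.Perm G := α.toEquiv.trans e with hf
  have hfapp : ∀ x, f x = e0 (α x) := fun x => rfl
  have hfAut : f ∈ cayAut G S := by
    intro x y
    have h1 : cayAdj S x y ↔ cayAdj T (α x) (α y) := by
      unfold cayAdj
      rw [hα, show α y * (α x)⁻¹ = α (y * x⁻¹) by simp [map_mul]]
      exact (Function.Injective.mem_set_image α.injective).symm
    rw [h1, hT (α x) (α y)]
    rfl
  have hconj : ∀ g : G, f * rhoCI G g * f⁻¹ = ((μ (α g) : H) : Equiv.Perm G) := by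
    intro g
    have hcomm : f * rhoCI G g = ((μ (α g) : H) : Equiv.Perm G) * f := by
      ext x
      simp only [Equiv.Perm.mul_apply, rhoCI_apply, hfapp]
      rw [show α (x * g⁻¹) = α x * (α g)⁻¹ by simp [map_mul]]
      exact hkey (α g) (α x)
    rw [show f * rhoCI G g * f⁻¹ = (f * rhoCI G g) * f⁻¹ from rfl, hcomm,
      mul_inv_cancel_right]
  refine ⟨f, hfAut, ?_⟩
  ext k
  simp only [Subgroup.mem_map, MonoidHom.mem_range, MulEquiv.coe_toMonoidHom,
    MulAut.conj_apply]
  constructor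
  · intro hk
    refine ⟨rhoCI G (α.symm (μ.symm ⟨k, hk⟩)), ⟨_, rfl⟩, ?_⟩
    rw [hconj]
    simp
  · rintro ⟨x, ⟨g, rfl⟩, hk⟩
    rw [hconj] at hk
    rw [← hk]
    exact SetLike.coe_mem _


theorem stmt_5 {G : Type*} [Group G] [Fintype G] (S : Set G) :
    isCI G S ↔
      ∀ H K : Subgroup (Equiv.Perm G), H ≤ cayAut G S → K ≤ cayAut G S →
        (∀ x y : G, ∃ h ∈ H, h x = y) → (∀ h ∈ H, (∃ x : G, h x = x) → h = 1) →
        (∀ x y : G, ∃ k ∈ K, k x = y) → (∀ k ∈ K, (∃ x : G, k x = x) → k = 1) →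
        Nonempty (H ≃* G) → Nonempty (K ≃* G) →
        ∃ f ∈ cayAut G S, K = H.map (MulAut.conj f).toMonoidHom := by
  constructor
  · -- CI → conjugacy
    intro hCI H K hH hK hHt hHf hKt hKf ⟨μH⟩ ⟨μK⟩
    obtain ⟨f, hf, hHeq⟩ := regular_conj hCI H hH hHt hHf μH.symm
    obtain ⟨f', hf', hKeq⟩ := regular_conj hCI K hK hKt hKf μK.symm
    refine ⟨f' * f⁻¹, mul_mem hf' (inv_mem hf), ?_⟩
    ext k
    constructor
    · intro hk
      rw [hKeq] at hk
      obtain ⟨x, ⟨g, rfl⟩, rfl⟩ := hk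
      refine Subgroup.mem_map.mpr ⟨f * rhoCI G g * f⁻¹, ?_, ?_⟩
      · rw [hHeq]
        exact Subgroup.mem_map.mpr ⟨rhoCI G g, ⟨g, rfl⟩, rfl⟩
      · simp only [MulEquiv.coe_toMonoidHom, MulAut.conj_apply]
        group
    · intro hk
      obtain ⟨h, hh, rfl⟩ := Subgroup.mem_map.mp hk
      rw [hHeq] at hh
      obtain ⟨x, ⟨g, rfl⟩, rfl⟩ := hh
      rw [hKeq]
      refine Subgroup.mem_map.mpr ⟨rhoCI G g, ⟨g, rfl⟩, ?_⟩
      simp only [MulEquiv.coe_toMonoidHom, MulAut.conj_apply]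
      group
  · -- conjugacy → CI
    intro hcrit T ⟨e, he⟩
    set R : Subgroup (Equiv.Perm G) := (rhoCI G).range with hR
    set K : Subgroup (Equiv.Perm G) := R.map (MulAut.conj e⁻¹).toMonoidHom with hKdef
    have hH : R ≤ cayAut G S := by
      rintro _ ⟨g, rfl⟩
      exact rhoCI_mem_cayAut S g
    have hK : K ≤ cayAut G S := by
      rintro _ ⟨x, ⟨g, rfl⟩, rfl⟩
      intro a b
      simp only [MulEquiv.coe_toMonoidHom, MulAut.conj_apply, Equiv.Perm.mul_apply]
      have h1 := he a b
      have h2 := rhoCI_mem_cayAut T (g := g) (e a) (e b)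
      have h3 := he (e⁻¹ ((rhoCI G g) (e a))) (e⁻¹ ((rhoCI G g) (e b)))
      simp only [inv_inv]
      rw [h1, h2, h3]
      simp
    have hHt : ∀ x y : G, ∃ h ∈ R, h x = y := by
      intro x y
      exact ⟨rhoCI G (y⁻¹ * x), ⟨_, rfl⟩, by rw [rhoCI_apply]; group⟩
    have hHf : ∀ h ∈ R, (∃ x : G, h x = x) → h = 1 := by
      rintro _ ⟨g, rfl⟩ ⟨x, hx⟩
      simp only [rhoCI_apply] at hx
      have : g = 1 := by
        have hx' : x * g⁻¹ = x * 1 := by simpa using hx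
        have := mul_left_cancel hx'
        simpa using this
      rw [this, map_one]
    have hKt : ∀ x y : G, ∃ k ∈ K, k x = y := by
      intro x y
      refine ⟨_, Subgroup.mem_map.mpr ⟨rhoCI G ((e y)⁻¹ * e x), ⟨_, rfl⟩, rfl⟩, ?_⟩
      simp only [MulEquiv.coe_toMonoidHom, MulAut.conj_apply, Equiv.Perm.mul_apply,
        inv_inv, rhoCI_apply]
      rw [show e x * ((e y)⁻¹ * e x)⁻¹ = e y by group]
      simp
    have hKf : ∀ k ∈ K, (∃ x : G, k x = x) → k = 1 := by
      rintro _ ⟨x0, ⟨g, rfl⟩, rfl⟩ ⟨x, hx⟩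
      simp only [MulEquiv.coe_toMonoidHom, MulAut.conj_apply, Equiv.Perm.mul_apply,
        inv_inv, rhoCI_apply] at hx
      have hfix : e x * g⁻¹ = e x := by
        have := congrArg e hx
        simpa using this
      have hg : g = 1 := by
        have hfix' : e x * g⁻¹ = e x * 1 := by simpa using hfix
        have := mul_left_cancel hfix'
        simpa using this
      rw [hg, map_one, map_one]
    have hHiso : Nonempty (R ≃* G) := ⟨(MonoidHom.ofInjective rhoCI_injective).symm⟩
    have hKiso : Nonempty (K ≃* G) :=
      ⟨((MulEquiv.subgroupMap (MulAut.conj e⁻¹) R).symm.trans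
        (MonoidHom.ofInjective rhoCI_injective).symm)⟩
    obtain ⟨f, hfmem, hKH⟩ := hcrit R K hH hK hHt hHf hKt hKf hHiso hKiso
    set φ : Equiv.Perm G := e * f with hφ
    have hnorm : ∀ g : G, ∃ g', φ * rhoCI G g * φ⁻¹ = rhoCI G g' := by
      intro g
      have hmem : (MulAut.conj f).toMonoidHom (rhoCI G g) ∈ R.map (MulAut.conj f).toMonoidHom :=
        Subgroup.mem_map.mpr ⟨rhoCI G g, ⟨g, rfl⟩, rfl⟩
      rw [← hKH] at hmem
      obtain ⟨x, ⟨g'', rfl⟩, hx⟩ := Subgroup.mem_map.mp hmem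
      simp only [MulEquiv.coe_toMonoidHom, MulAut.conj_apply] at hx
      refine ⟨g'', ?_⟩
      calc (e * f) * rhoCI G g * (e * f)⁻¹ = e * (f * rhoCI G g * f⁻¹) * e⁻¹ := by group
        _ = e * (e⁻¹ * rhoCI G g'' * (e⁻¹)⁻¹) * e⁻¹ := by rw [hx]
        _ = rhoCI G g'' := by group
    set ψ : Equiv.Perm G := rhoCI G (φ 1) * φ with hψ
    have hψ1 : ψ 1 = 1 := by
      simp [hψ, Equiv.Perm.mul_apply]
    have hψnorm : ∀ g : G, ∃ g', ψ * rhoCI G g * ψ⁻¹ = rhoCI G g' := by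
      intro g
      obtain ⟨g', hg'⟩ := hnorm g
      refine ⟨φ 1 * g' * (φ 1)⁻¹, ?_⟩
      have : rhoCI G (φ 1 * g' * (φ 1)⁻¹) = rhoCI G (φ 1) * rhoCI G g' * (rhoCI G (φ 1))⁻¹ := by
        simp only [map_mul, map_inv]
      rw [this, ← hg', hψ]
      group
    have hmul := psi_hom ψ hψ1 hψnorm
    have hψiso : ∀ x y : G, cayAdj S x y ↔ cayAdj T (ψ x) (ψ y) := by
      intro x y
      rw [hfmem x y, he (f x) (f y)]
      have h2 := rhoCI_mem_cayAut T (g := φ 1) (e (f x)) (e (f y))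
      rw [h2]
      rfl
    refine ⟨MulEquiv.mk' ψ hmul, ?_⟩
    have hmem : ∀ z : G, z ∈ T ↔ ψ⁻¹ z ∈ S := by
      intro z
      have h1 := hψiso 1 (ψ⁻¹ z)
      rw [hψ1] at h1
      have h2 : ψ (ψ⁻¹ z) = z := Equiv.apply_symm_apply ψ z
      rw [h2] at h1
      simp only [cayAdj, inv_one, mul_one] at h1
      exact h1.symm
    ext z
    rw [hmem z]
    constructor
    · intro hz
      exact ⟨ψ⁻¹ z, hz, Equiv.apply_symm_apply ψ z⟩
    · rintro ⟨s, hs, rfl⟩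
      show ψ⁻¹ (ψ s) ∈ S
      rw [Equiv.Perm.coe_inv, Equiv.symm_apply_apply]
      exact hs
end

section
/- Let Γ = BCay(G,S) be a connected arc-transitive cubic bi-Cayley graph of a finite group G, and let N < Ĝ be a subgroup of the group of right translations that is normal in Aut(Γ). Then N equals the kernel of the action of Aut(Γ) on the set of N-orbits, and the quotient graph Γ_N is a connected cubic arc-transitive graph isomorphic to a bi-Cayley graph of the group Ĝ/N. -/
/-- The setoid on vertices whose classes are the orbits of a subgroup
of permutations. -/
def orbitSetoid {V : Type*} (N : Subgroup (Equiv.Perm V)) : Setoid V where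
  r v w := ∃ n ∈ N, n v = w
  iseqv := by
    constructor
    · intro v; exact ⟨1, N.one_mem, rfl⟩
    · rintro v w ⟨n, hn, rfl⟩
      exact ⟨n⁻¹, N.inv_mem hn, by simp⟩
    · rintro u v w ⟨n, hn, rfl⟩ ⟨m, hm, rfl⟩
      exact ⟨m * n, N.mul_mem hm hn, rfl⟩

/-- The quotient graph of a graph by the orbits of a group of permutations:
vertices are the orbits, and two distinct orbits are adjacent iff some vertex of
one is adjacent to some vertex of the other. -/
def quotGraph {V : Type*} (Γ : SimpleGraph V) (N : Subgroup (Equiv.Perm V)) :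
    SimpleGraph (Quotient (orbitSetoid N)) where
  Adj c d := c ≠ d ∧ ∃ v w : V, Quotient.mk _ v = c ∧ Quotient.mk _ w = d ∧ Γ.Adj v w
  symm := ⟨by
    rintro c d ⟨hne, v, w, hv, hw, h⟩
    exact ⟨hne.symm, w, v, hw, hv, h.symm⟩⟩
  loopless := ⟨by rintro c ⟨hne, -⟩; exact hne rfl⟩

/-- Arc-transitivity: the automorphism group is transitive on ordered pairs of
adjacent vertices. -/
def IsArcTransitive {V : Type*} (Γ : SimpleGraph V) : Prop :=
  ∀ v w v' w' : V, Γ.Adj v w → Γ.Adj v' w' →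
    ∃ f ∈ graphAut Γ, f v = v' ∧ f w = w'

section Aux

variable {G : Type*} [Group G]

lemma bc_adj {S : Set G} {v w : G × Bool} :
    (biCayley G S).Adj v w ↔ ((v.2 = false ∧ w.2 = true ∧ w.1 * v.1⁻¹ ∈ S) ∨
      (v.2 = true ∧ w.2 = false ∧ v.1 * w.1⁻¹ ∈ S)) := Iff.rfl

lemma bt_apply (g : G) (v : G × Bool) : biTrans G g v = (v.1 * g⁻¹, v.2) := rfl

lemma bt_mem_aut (S : Set G) (g : G) : biTrans G g ∈ graphAut (biCayley G S) := by
  intro a b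
  simp only [bc_adj, bt_apply]
  have h1 : b.1 * g⁻¹ * (a.1 * g⁻¹)⁻¹ = b.1 * a.1⁻¹ := by group
  have h2 : a.1 * g⁻¹ * (b.1 * g⁻¹)⁻¹ = a.1 * b.1⁻¹ := by group
  rw [h1, h2]

variable {N : Subgroup (Equiv.Perm (G × Bool))}

lemma rel_iff (hNG : N ≤ (biTrans G).range) {v w : G × Bool} :
    (orbitSetoid N).r v w ↔ w.2 = v.2 ∧ biTrans G (w.1⁻¹ * v.1) ∈ N := by
  constructor
  · rintro ⟨n, hn, rfl⟩
    obtain ⟨g, rfl⟩ := hNG hn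
    refine ⟨rfl, ?_⟩
    have : (biTrans G g v).1⁻¹ * v.1 = g := by
      rw [bt_apply]; group
    rwa [this]
  · rintro ⟨h2, hmem⟩
    refine ⟨biTrans G (w.1⁻¹ * v.1), hmem, ?_⟩
    rw [bt_apply]
    ext
    · show v.1 * (w.1⁻¹ * v.1)⁻¹ = w.1; group
    · exact h2.symm

lemma conj_mem (S : Set G)
    (hnorm : ∀ a ∈ graphAut (biCayley G S), ∀ n ∈ N, a * n * a⁻¹ ∈ N)
    (a : G) {g : G} (hg : biTrans G g ∈ N) : biTrans G (a * g * a⁻¹) ∈ N := by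
  have := hnorm (biTrans G a) (bt_mem_aut S a) (biTrans G g) hg
  rw [map_mul, map_mul, map_inv]
  exact this


lemma deg (S : Set G) (hconn : (biCayley G S).Connected)
    (hNG : N ≤ (biTrans G).range)
    {s0 : G} (hs0 : s0 ∈ S)
    (hP : ∀ s ∈ S, ∀ t ∈ S, biTrans G (t⁻¹ * s) ∈ N) :
    N = (biTrans G).range := by
  refine le_antisymm hNG ?_
  have step : ∀ v w : G × Bool, (biCayley G S).Adj v w →
      ((v.2 = false → biTrans G v.1 ∈ N) ∧ (v.2 = true → biTrans G (s0⁻¹ * v.1) ∈ N)) →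
      ((w.2 = false → biTrans G w.1 ∈ N) ∧ (w.2 = true → biTrans G (s0⁻¹ * w.1) ∈ N)) := by
    rintro ⟨x, i⟩ ⟨y, j⟩ h ⟨C1, C2⟩
    rw [bc_adj] at h
    rcases h with ⟨hv, hw, hm⟩ | ⟨hv, hw, hm⟩ <;> simp only at hv hw hm C1 C2 <;>
      subst hv <;> subst hw
    · refine ⟨fun h => by simp at h, fun _ => ?_⟩
      have h1 : biTrans G (s0⁻¹ * (y * x⁻¹)) ∈ N := hP _ hm _ hs0
      have h2 : biTrans G x ∈ N := C1 rfl
      have e : s0⁻¹ * y = (s0⁻¹ * (y * x⁻¹)) * x := by group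
      rw [e, map_mul]; exact N.mul_mem h1 h2
    · refine ⟨fun _ => ?_, fun h => by simp at h⟩
      have h1 : biTrans G ((x * y⁻¹)⁻¹ * s0) ∈ N := hP _ hs0 _ hm
      have h2 : biTrans G (s0⁻¹ * x) ∈ N := C2 rfl
      have e : y = ((x * y⁻¹)⁻¹ * s0) * (s0⁻¹ * x) := by group
      rw [e, map_mul]; exact N.mul_mem h1 h2
  have walkind : ∀ {v w : G × Bool}, (biCayley G S).Walk v w →
      ((v.2 = false → biTrans G v.1 ∈ N) ∧ (v.2 = true → biTrans G (s0⁻¹ * v.1) ∈ N)) →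
      ((w.2 = false → biTrans G w.1 ∈ N) ∧ (w.2 = true → biTrans G (s0⁻¹ * w.1) ∈ N)) := by
    intro v w p
    induction p with
    | nil => exact id
    | cons h q ih => exact fun hv => ih (step _ _ h hv)
  rintro n ⟨g, rfl⟩
  obtain ⟨p⟩ := hconn.preconnected (1, false) (g, false)
  exact (walkind p ⟨fun _ => by simpa using N.one_mem, by simp⟩).1 rfl

lemma pairs (S : Set G) [Fintype G] (hS : S.ncard = 3)
    (hconn : (biCayley G S).Connected)
    (harc : IsArcTransitive (biCayley G S))
    (hNG : N ≤ (biTrans G).range) (hne : N ≠ (biTrans G).range)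
    (hnorm : ∀ a ∈ graphAut (biCayley G S), ∀ n ∈ N, a * n * a⁻¹ ∈ N) :
    ∀ s ∈ S, ∀ t ∈ S, biTrans G (t⁻¹ * s) ∈ N → s = t := by
  by_contra hcon
  push_neg at hcon
  obtain ⟨s, hs, t, ht, hst, hstne⟩ := hcon
  have step1 : ∀ u ∈ S, biTrans G (s⁻¹ * u) ∈ N := by
    intro u hu
    by_cases hus : u = s
    · subst hus; simpa using N.one_mem
    by_cases hut : u = t
    · subst hut
      have h := N.inv_mem hst
      rw [← map_inv] at h
      simpa [mul_inv_rev] using h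
    have hSeq : S = {s, t, u} := by
      have h3 : ({s, t, u} : Set G).ncard = 3 :=
        Set.ncard_eq_three.mpr ⟨s, t, u, hstne, Ne.symm hus, Ne.symm hut, rfl⟩
      refine (Set.eq_of_subset_of_ncard_le ?_ (by rw [h3, hS]) S.toFinite).symm
      rintro z (rfl | rfl | rfl) <;> assumption
    have hadj1 : (biCayley G S).Adj (1, false) (s, true) := Or.inl ⟨rfl, rfl, by simpa⟩
    have hadj2 : (biCayley G S).Adj (1, false) (u, true) := Or.inl ⟨rfl, rfl, by simpa⟩
    obtain ⟨f, hf, hf1, hfs⟩ := harc (1, false) (s, true) (1, false) (u, true) hadj1 hadj2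
    have hns : biTrans G (t⁻¹ * s) (s, true) = (t, true) := by
      rw [bt_apply]
      ext
      · simp only; group
      · rfl
    have hmN : f * biTrans G (t⁻¹ * s) * f⁻¹ ∈ N := hnorm f hf _ hst
    have hmu : (f * biTrans G (t⁻¹ * s) * f⁻¹) (u, true) = f (t, true) := by
      have hinv : f⁻¹ (u, true) = (s, true) := by rw [← hfs]; simp
      rw [Equiv.Perm.mul_apply, Equiv.Perm.mul_apply, hinv, hns]
    have hadj3 : (biCayley G S).Adj (1, false) (f (t, true)) := by
      have := (hf (1, false) (t, true)).mp (Or.inl ⟨rfl, rfl, by simpa⟩)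
      rwa [hf1] at this
    obtain ⟨hw2, hwS⟩ : (f (t, true)).2 = true ∧ (f (t, true)).1 ∈ S := by
      rcases hadj3 with ⟨_, h2, h3⟩ | ⟨h1, _, _⟩
      · exact ⟨h2, by simpa using h3⟩
      · simp at h1
    have hwu : (f (t, true)).1 ≠ u := by
      intro hwu'
      have hpe : f (t, true) = f (s, true) := by
        rw [hfs]; exact Prod.ext hwu' hw2
      exact hstne (congrArg Prod.fst (f.injective hpe)).symm
    have hrel : biTrans G ((f (t, true)).1⁻¹ * u) ∈ N := by
      have hr : (orbitSetoid N).r (u, true) (f (t, true)) := ⟨_, hmN, hmu⟩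
      exact ((rel_iff hNG).mp hr).2
    have hwS' : (f (t, true)).1 ∈ ({s, t, u} : Set G) := hSeq ▸ hwS
    rcases hwS' with hw | hw | hw
    · rwa [hw] at hrel
    · rw [hw] at hrel
      have h1 : biTrans G (s⁻¹ * t) ∈ N := by
        have h := N.inv_mem hst
        rw [← map_inv] at h
        simpa [mul_inv_rev] using h
      have e : s⁻¹ * u = (s⁻¹ * t) * (t⁻¹ * u) := by group
      rw [e, map_mul]; exact N.mul_mem h1 hrel
    · exact absurd hw hwu
  have hP : ∀ a ∈ S, ∀ b ∈ S, biTrans G (b⁻¹ * a) ∈ N := by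
    intro a ha b hb
    have e : b⁻¹ * a = (s⁻¹ * b)⁻¹ * (s⁻¹ * a) := by group
    rw [e, map_mul, map_inv]
    exact N.mul_mem (N.inv_mem (step1 b hb)) (step1 a ha)
  exact hne (deg S hconn hNG hs hP)


lemma unique_nbr (S : Set G)
    (hNG : N ≤ (biTrans G).range)
    (hnorm : ∀ a ∈ graphAut (biCayley G S), ∀ n ∈ N, a * n * a⁻¹ ∈ N)
    (hpairs : ∀ s ∈ S, ∀ t ∈ S, biTrans G (t⁻¹ * s) ∈ N → s = t)
    {v w w' : G × Bool} (h : (biCayley G S).Adj v w) (h' : (biCayley G S).Adj v w')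
    (hr : (orbitSetoid N).r w w') : w = w' := by
  obtain ⟨hr2, hrm⟩ := (rel_iff hNG).mp hr
  rcases v with ⟨x, i⟩; rcases w with ⟨y, j⟩; rcases w' with ⟨y', j'⟩
  rw [bc_adj] at h h'
  simp only at h h' hr2 hrm
  rcases h with ⟨h1, h2, h3⟩ | ⟨h1, h2, h3⟩
  · rcases h' with ⟨h1', h2', h3'⟩ | ⟨h1', h2', h3'⟩
    · have hc : biTrans G ((y' * x⁻¹)⁻¹ * (y * x⁻¹)) ∈ N := by
        have e : (y' * x⁻¹)⁻¹ * (y * x⁻¹) = x * (y'⁻¹ * y) * x⁻¹ := by group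
        rw [e]; exact conj_mem S hnorm x hrm
      have heq := hpairs _ h3 _ h3' hc
      exact Prod.ext (mul_right_cancel heq) (h2.trans h2'.symm)
    · rw [h1] at h1'; exact absurd h1' (by simp)
  · rcases h' with ⟨h1', h2', h3'⟩ | ⟨h1', h2', h3'⟩
    · rw [h1] at h1'; exact absurd h1' (by simp)
    · have hc : biTrans G ((x * y'⁻¹)⁻¹ * (x * y⁻¹)) ∈ N := by
        have e : (x * y'⁻¹)⁻¹ * (x * y⁻¹) = y' * (y'⁻¹ * y)⁻¹ * y'⁻¹ := by group
        rw [e]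
        exact conj_mem S hnorm y' (by rw [map_inv]; exact N.inv_mem hrm)
      have heq := hpairs _ h3 _ h3' hc
      have hy : y = y' := by
        have := mul_left_cancel heq
        exact inv_injective this
      exact Prod.ext hy (h2.trans h2'.symm)

lemma part1 (S : Set G)
    (hconn : (biCayley G S).Connected)
    (hNG : N ≤ (biTrans G).range)
    (hnorm : ∀ a ∈ graphAut (biCayley G S), ∀ n ∈ N, a * n * a⁻¹ ∈ N)
    (hpairs : ∀ s ∈ S, ∀ t ∈ S, biTrans G (t⁻¹ * s) ∈ N → s = t)
    {a : Equiv.Perm (G × Bool)} (ha : a ∈ graphAut (biCayley G S))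
    (hk : ∀ v, (orbitSetoid N).r v (a v)) : a ∈ N := by
  obtain ⟨n, hn, hfix⟩ := hk (1, false)
  obtain ⟨g, hg⟩ := hNG hn
  have hnAut : n ∈ graphAut (biCayley G S) := hg ▸ bt_mem_aut S g
  have hbAut : n⁻¹ * a ∈ graphAut (biCayley G S) :=
    Subgroup.mul_mem _ (Subgroup.inv_mem _ hnAut) ha
  have hbk : ∀ v, (orbitSetoid N).r v ((n⁻¹ * a) v) := fun v =>
    (orbitSetoid N).iseqv.trans (hk v) ⟨n⁻¹, N.inv_mem hn, by rw [Equiv.Perm.mul_apply]⟩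
  have hb0 : (n⁻¹ * a) (1, false) = (1, false) := by
    rw [Equiv.Perm.mul_apply, ← hfix]; simp
  have key : ∀ v w : G × Bool, (biCayley G S).Adj v w →
      (n⁻¹ * a) v = v → (n⁻¹ * a) w = w := by
    intro v w hvw hbv
    have h1 : (biCayley G S).Adj v ((n⁻¹ * a) w) := by
      have := (hbAut v w).mp hvw
      rwa [hbv] at this
    exact (unique_nbr S hNG hnorm hpairs hvw h1 (hbk w)).symm
  have hall : ∀ v, (n⁻¹ * a) v = v := by
    have walkind : ∀ {v w : G × Bool}, (biCayley G S).Walk v w →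
        (n⁻¹ * a) v = v → (n⁻¹ * a) w = w := by
      intro v w p
      induction p with
      | nil => exact id
      | cons h q ih => exact fun hv => ih (key _ _ h hv)
    intro v
    obtain ⟨p⟩ := hconn.preconnected (1, false) v
    exact walkind p hb0
  have hone : n⁻¹ * a = 1 := Equiv.ext hall
  rw [inv_mul_eq_one] at hone
  exact hone ▸ hn


lemma ne_of_bool (hNG : N ≤ (biTrans G).range) {v w : G × Bool} (h : v.2 ≠ w.2) :
    (Quotient.mk (orbitSetoid N) v : Quotient (orbitSetoid N)) ≠ Quotient.mk _ w := by
  intro he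
  exact h (((rel_iff hNG).mp (Quotient.exact he)).1).symm

lemma conn_quot (S : Set G) (hconn : (biCayley G S).Connected)
    (hNG : N ≤ (biTrans G).range) : (quotGraph (biCayley G S) N).Connected := by
  refine SimpleGraph.Connected.map ⟨Quotient.mk _, ?_⟩
    (fun c => Quotient.inductionOn c fun v => ⟨v, rfl⟩) hconn
  intro v w h
  refine ⟨ne_of_bool hNG ?_, v, w, rfl, rfl, h⟩
  rcases h with ⟨h1, h2, _⟩ | ⟨h1, h2, _⟩ <;> rw [h1, h2] <;> simp

lemma nbr_false (S : Set G) (hNG : N ≤ (biTrans G).range) (x : G) :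
    (quotGraph (biCayley G S) N).neighborSet (Quotient.mk _ (x, false)) =
      (fun s => (Quotient.mk _ (s * x, true) : Quotient (orbitSetoid N))) '' S := by
  ext d
  simp only [SimpleGraph.mem_neighborSet, Set.mem_image]
  constructor
  · rintro ⟨hne, v, w, hv, hw, hadj⟩
    obtain ⟨hv2, hvm⟩ := (rel_iff hNG).mp (Quotient.exact hv)
    rcases v with ⟨v1, i⟩; rcases w with ⟨w1, j⟩
    simp only at hv2 hvm
    rcases hadj with ⟨h1, h2, h3⟩ | ⟨h1, _, _⟩
    · simp only at h1 h2 h3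
      refine ⟨w1 * v1⁻¹, h3, ?_⟩
      rw [← hw]
      refine Quotient.sound ((rel_iff hNG).mpr ⟨h2, ?_⟩)
      have e : w1⁻¹ * (w1 * v1⁻¹ * x) = (x⁻¹ * v1)⁻¹ := by group
      rw [e, map_inv]; exact N.inv_mem hvm
    · rw [← hv2] at h1; exact absurd h1 (by simp)
  · rintro ⟨s, hs, rfl⟩
    refine ⟨ne_of_bool hNG (by simp), (x, false), (s * x, true), rfl, rfl,
      Or.inl ⟨rfl, rfl, ?_⟩⟩
    simpa [mul_inv_cancel_right] using hs

lemma nbr_true (S : Set G) (hNG : N ≤ (biTrans G).range) (x : G) :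
    (quotGraph (biCayley G S) N).neighborSet (Quotient.mk _ (x, true)) =
      (fun s => (Quotient.mk _ (s⁻¹ * x, false) : Quotient (orbitSetoid N))) '' S := by
  ext d
  simp only [SimpleGraph.mem_neighborSet, Set.mem_image]
  constructor
  · rintro ⟨hne, v, w, hv, hw, hadj⟩
    obtain ⟨hv2, hvm⟩ := (rel_iff hNG).mp (Quotient.exact hv)
    rcases v with ⟨v1, i⟩; rcases w with ⟨w1, j⟩
    simp only at hv2 hvm
    rcases hadj with ⟨h1, _, _⟩ | ⟨h1, h2, h3⟩
    · rw [← hv2] at h1; exact absurd h1 (by simp)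
    · simp only at h1 h2 h3
      refine ⟨v1 * w1⁻¹, h3, ?_⟩
      rw [← hw]
      refine Quotient.sound ((rel_iff hNG).mpr ⟨h2, ?_⟩)
      have e : w1⁻¹ * ((v1 * w1⁻¹)⁻¹ * x) = (x⁻¹ * v1)⁻¹ := by group
      rw [e, map_inv]; exact N.inv_mem hvm
  · rintro ⟨s, hs, rfl⟩
    refine ⟨ne_of_bool hNG (by simp), (x, true), (s⁻¹ * x, false), rfl, rfl,
      Or.inr ⟨rfl, rfl, ?_⟩⟩
    have e : x * (s⁻¹ * x)⁻¹ = s := by group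
    rw [e]; exact hs

lemma cubic (S : Set G) (hS : S.ncard = 3) (hNG : N ≤ (biTrans G).range)
    (hnorm : ∀ a ∈ graphAut (biCayley G S), ∀ n ∈ N, a * n * a⁻¹ ∈ N)
    (hpairs : ∀ s ∈ S, ∀ t ∈ S, biTrans G (t⁻¹ * s) ∈ N → s = t) :
    ∀ c, ((quotGraph (biCayley G S) N).neighborSet c).ncard = 3 := by
  intro c
  induction c using Quotient.inductionOn with
  | h v =>
    rcases v with ⟨x, i⟩
    cases i
    · rw [nbr_false S hNG x, Set.ncard_image_of_injOn, hS]
      intro s hs t ht he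
      obtain ⟨-, hr⟩ := (rel_iff hNG).mp (Quotient.exact he)
      have hc := conj_mem S hnorm x hr
      have e : x * ((t * x)⁻¹ * (s * x)) * x⁻¹ = t⁻¹ * s := by group
      rw [e] at hc
      exact hpairs s hs t ht hc
    · rw [nbr_true S hNG x, Set.ncard_image_of_injOn, hS]
      intro s hs t ht he
      obtain ⟨-, hr⟩ := (rel_iff hNG).mp (Quotient.exact he)
      have h1 := conj_mem S hnorm x hr
      have e : x * ((t⁻¹ * x)⁻¹ * (s⁻¹ * x)) * x⁻¹ = t * s⁻¹ := by group
      rw [e] at h1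
      have h2 := conj_mem S hnorm t⁻¹ h1
      have e2 : t⁻¹ * (t * s⁻¹) * t⁻¹⁻¹ = s⁻¹ * t := by group
      rw [e2] at h2
      exact (hpairs t ht s hs h2).symm


lemma rcong (S : Set G)
    (hnorm : ∀ a ∈ graphAut (biCayley G S), ∀ n ∈ N, a * n * a⁻¹ ∈ N)
    {f : Equiv.Perm (G × Bool)} (hf : f ∈ graphAut (biCayley G S)) :
    ∀ v w : G × Bool, (orbitSetoid N).r v w → (orbitSetoid N).r (f v) (f w) := by
  rintro v w ⟨n, hn, rfl⟩
  refine ⟨f * n * f⁻¹, hnorm f hf n hn, ?_⟩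
  rw [Equiv.Perm.mul_apply, Equiv.Perm.mul_apply, Equiv.Perm.inv_def, Equiv.symm_apply_apply]

lemma quot_adj_map (S : Set G)
    (hnorm : ∀ a ∈ graphAut (biCayley G S), ∀ n ∈ N, a * n * a⁻¹ ∈ N)
    {f : Equiv.Perm (G × Bool)} (hf : f ∈ graphAut (biCayley G S)) :
    ∀ c d, (quotGraph (biCayley G S) N).Adj c d →
      (quotGraph (biCayley G S) N).Adj (Quotient.map f (rcong S hnorm hf) c)
        (Quotient.map f (rcong S hnorm hf) d) := by
  rintro c d ⟨hne, v, w, hv, hw, hadj⟩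
  subst hv; subst hw
  refine ⟨?_, f v, f w, rfl, rfl, (hf v w).mp hadj⟩
  intro he
  apply hne
  have h1 := Quotient.exact he
  have h2 := rcong S hnorm (Subgroup.inv_mem _ hf) _ _ h1
  rw [Equiv.Perm.inv_def, Equiv.symm_apply_apply, Equiv.symm_apply_apply] at h2
  exact Quotient.sound h2

lemma arc_quot (S : Set G)
    (harc : IsArcTransitive (biCayley G S))
    (hnorm : ∀ a ∈ graphAut (biCayley G S), ∀ n ∈ N, a * n * a⁻¹ ∈ N) :
    IsArcTransitive (quotGraph (biCayley G S) N) := by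
  intro c d c' d' hcd hcd'
  obtain ⟨hne, v, w, hv, hw, hadj⟩ := hcd
  obtain ⟨hne', v', w', hv', hw', hadj'⟩ := hcd'
  obtain ⟨f, hf, hfv, hfw⟩ := harc v w v' w' hadj hadj'
  have hfi := Subgroup.inv_mem (graphAut (biCayley G S)) hf
  have ea : ∀ c, Quotient.map ⇑f⁻¹ (rcong S hnorm hfi)
      (Quotient.map ⇑f (rcong S hnorm hf) c) = c := fun c =>
    Quotient.inductionOn c fun u =>
      congrArg (Quotient.mk _) (Equiv.symm_apply_apply f u)
  have eb : ∀ c, Quotient.map ⇑f (rcong S hnorm hf)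
      (Quotient.map ⇑f⁻¹ (rcong S hnorm hfi) c) = c := fun c =>
    Quotient.inductionOn c fun u =>
      congrArg (Quotient.mk _) (Equiv.apply_symm_apply f u)
  refine ⟨⟨Quotient.map ⇑f (rcong S hnorm hf), Quotient.map ⇑f⁻¹ (rcong S hnorm hfi),
    ea, eb⟩, ?_, ?_, ?_⟩
  · intro a b
    show (quotGraph (biCayley G S) N).Adj a b ↔
      (quotGraph (biCayley G S) N).Adj (Quotient.map ⇑f (rcong S hnorm hf) a)
        (Quotient.map ⇑f (rcong S hnorm hf) b)
    constructor
    · exact quot_adj_map S hnorm hf a b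
    · intro h
      have h2 := quot_adj_map S hnorm hfi _ _ h
      rwa [ea, ea] at h2
  · show Quotient.map ⇑f (rcong S hnorm hf) c = c'
    rw [← hv, ← hv']
    exact congrArg (Quotient.mk _) hfv
  · show Quotient.map ⇑f (rcong S hnorm hf) d = d'
    rw [← hw, ← hw']
    exact congrArg (Quotient.mk _) hfw


lemma iso_exists (S : Set G)
    (hNG : N ≤ (biTrans G).range)
    (hnorm : ∀ a ∈ graphAut (biCayley G S), ∀ n ∈ N, a * n * a⁻¹ ∈ N)
    [hquot : (N.subgroupOf (biTrans G).range).Normal] :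
    ∃ T : Set ((biTrans G).range ⧸ N.subgroupOf (biTrans G).range),
      Nonempty (quotGraph (biCayley G S) N ≃g
        biCayley ((biTrans G).range ⧸ N.subgroupOf (biTrans G).range) T) := by
  classical
  set Q := (biTrans G).range ⧸ N.subgroupOf (biTrans G).range with hQ
  set ψ : G →* Q := (QuotientGroup.mk' (N.subgroupOf (biTrans G).range)).comp
      (biTrans G).rangeRestrict with hψdef
  have hker : ∀ g : G, ψ g = 1 ↔ biTrans G g ∈ N := by
    intro g
    rw [hψdef, MonoidHom.comp_apply, QuotientGroup.mk'_apply, QuotientGroup.eq_one_iff,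
      Subgroup.mem_subgroupOf, MonoidHom.coe_rangeRestrict]
  have heq : ∀ x y : G, ψ x = ψ y ↔ biTrans G (y⁻¹ * x) ∈ N := by
    intro x y
    rw [← hker, map_mul, map_inv, inv_mul_eq_one]
    exact ⟨Eq.symm, Eq.symm⟩
  have hsurj : Function.Surjective ψ := by
    intro q
    obtain ⟨r, rfl⟩ := QuotientGroup.mk_surjective q
    obtain ⟨g, hg⟩ := MonoidHom.mem_range.mp r.2
    exact ⟨g, congrArg (QuotientGroup.mk (s := N.subgroupOf (biTrans G).range))
      (Subtype.ext hg)⟩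
  have hresp : ∀ v w : G × Bool, (orbitSetoid N).r v w →
      ((ψ v.1, v.2) : Q × Bool) = (ψ w.1, w.2) := by
    intro v w hr
    obtain ⟨h2, hm⟩ := (rel_iff hNG).mp hr
    exact Prod.ext ((heq v.1 w.1).mpr hm) h2.symm
  set F0 : Quotient (orbitSetoid N) → Q × Bool :=
    Quotient.lift (fun v : G × Bool => ((ψ v.1, v.2) : Q × Bool)) hresp with hF0
  have hinj : Function.Injective F0 := by
    intro c d
    refine Quotient.inductionOn₂ c d ?_
    rintro ⟨x, i⟩ ⟨y, j⟩ h
    have h1 : ψ x = ψ y := congrArg Prod.fst h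
    have h2 : i = j := congrArg Prod.snd h
    exact Quotient.sound ((rel_iff hNG).mpr ⟨h2.symm, (heq x y).mp h1⟩)
  have hsurj2 : Function.Surjective F0 := by
    rintro ⟨q, i⟩
    obtain ⟨x, rfl⟩ := hsurj q
    exact ⟨Quotient.mk _ (x, i), rfl⟩
  refine ⟨ψ '' S, ⟨⟨Equiv.ofBijective F0 ⟨hinj, hsurj2⟩, ?_⟩⟩⟩
  intro a b
  show (biCayley Q (ψ '' S)).Adj (F0 a) (F0 b) ↔ (quotGraph (biCayley G S) N).Adj a b
  refine Quotient.inductionOn₂ a b ?_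
  rintro ⟨x, i⟩ ⟨y, j⟩
  constructor
  · intro h
    rw [bc_adj] at h
    rcases h with ⟨h1, h2, h3⟩ | ⟨h1, h2, h3⟩
    · have h1' : i = false := h1
      have h2' : j = true := h2
      subst h1'; subst h2'
      obtain ⟨s, hs, hψs⟩ := h3
      have hxy : ψ s = ψ (y * x⁻¹) := by rw [map_mul, map_inv]; exact hψs
      have hm : biTrans G (s⁻¹ * (y * x⁻¹)) ∈ N := (heq (y * x⁻¹) s).mp hxy.symm
      refine ⟨ne_of_bool hNG (by simp), (x, false), (s * x, true), rfl, ?_,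
        Or.inl ⟨rfl, rfl, by simpa [mul_inv_cancel_right] using hs⟩⟩
      refine Quotient.sound ((rel_iff hNG).mpr ⟨rfl, ?_⟩)
      have e : y⁻¹ * (s * x) = x⁻¹ * (s⁻¹ * (y * x⁻¹))⁻¹ * x⁻¹⁻¹ := by group
      rw [e]
      exact conj_mem S hnorm x⁻¹ (by rw [map_inv]; exact N.inv_mem hm)
    · have h1' : i = true := h1
      have h2' : j = false := h2
      subst h1'; subst h2'
      obtain ⟨s, hs, hψs⟩ := h3
      have hxy : ψ s = ψ (x * y⁻¹) := by rw [map_mul, map_inv]; exact hψs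
      have hm : biTrans G (s⁻¹ * (x * y⁻¹)) ∈ N := (heq (x * y⁻¹) s).mp hxy.symm
      refine ⟨ne_of_bool hNG (by simp), (x, true), (s⁻¹ * x, false), rfl, ?_,
        Or.inr ⟨rfl, rfl, by rw [show x * (s⁻¹ * x)⁻¹ = s by group]; exact hs⟩⟩
      refine Quotient.sound ((rel_iff hNG).mpr ⟨rfl, ?_⟩)
      have e : y⁻¹ * (s⁻¹ * x) = y⁻¹ * (s⁻¹ * (x * y⁻¹)) * y⁻¹⁻¹ := by group
      rw [e]
      exact conj_mem S hnorm y⁻¹ hm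
  · rintro ⟨hne, v, w, hv, hw, hadj⟩
    obtain ⟨hv2, hvm⟩ := (rel_iff hNG).mp (Quotient.exact hv)
    obtain ⟨hw2, hwm⟩ := (rel_iff hNG).mp (Quotient.exact hw)
    rcases v with ⟨v1, iv⟩; rcases w with ⟨w1, jw⟩
    simp only at hv2 hvm hw2 hwm
    rw [bc_adj] at hadj
    rcases hadj with ⟨h1, h2, h3⟩ | ⟨h1, h2, h3⟩
    · simp only at h1 h2 h3
      subst h1; subst h2
      rw [bc_adj]
      refine Or.inl ⟨hv2, hw2, ?_⟩
      refine ⟨w1 * v1⁻¹, h3, ?_⟩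
      have hm : biTrans G ((y * x⁻¹)⁻¹ * (w1 * v1⁻¹)) ∈ N := by
        have e : (y * x⁻¹)⁻¹ * (w1 * v1⁻¹) =
            x * ((y⁻¹ * w1) * (x⁻¹ * v1)⁻¹) * x⁻¹ := by group
        rw [e]
        refine conj_mem S hnorm x ?_
        rw [map_mul, map_inv]
        exact N.mul_mem hwm (N.inv_mem hvm)
      have hq := (heq (w1 * v1⁻¹) (y * x⁻¹)).mpr hm
      exact hq.trans (by rw [map_mul, map_inv]; rfl)
    · simp only at h1 h2 h3
      subst h1; subst h2
      rw [bc_adj]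
      refine Or.inr ⟨hv2, hw2, ?_⟩
      refine ⟨v1 * w1⁻¹, h3, ?_⟩
      have hm : biTrans G ((x * y⁻¹)⁻¹ * (v1 * w1⁻¹)) ∈ N := by
        have e : (x * y⁻¹)⁻¹ * (v1 * w1⁻¹) =
            y * ((x⁻¹ * v1) * (y⁻¹ * w1)⁻¹) * y⁻¹ := by group
        rw [e]
        refine conj_mem S hnorm y ?_
        rw [map_mul, map_inv]
        exact N.mul_mem hvm (N.inv_mem hwm)
      have hq := (heq (v1 * w1⁻¹) (x * y⁻¹)).mpr hm
      exact hq.trans (by rw [map_mul, map_inv]; rfl)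

end Aux

theorem stmt_14 {G : Type*} [Group G] [Fintype G] (S : Set G) (hS : S.ncard = 3)
    (hconn : (biCayley G S).Connected)
    (harc : IsArcTransitive (biCayley G S))
    (N : Subgroup (Equiv.Perm (G × Bool)))
    (hNG : N ≤ (biTrans G).range) (hne : N ≠ (biTrans G).range)
    (hnorm : ∀ a ∈ graphAut (biCayley G S), ∀ n ∈ N, a * n * a⁻¹ ∈ N)
    [hquot : (N.subgroupOf (biTrans G).range).Normal] :
    (∀ a ∈ graphAut (biCayley G S),
        ((∀ v : G × Bool, (orbitSetoid N).r v (a v)) ↔ a ∈ N)) ∧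
    (quotGraph (biCayley G S) N).Connected ∧
    (∀ c, ((quotGraph (biCayley G S) N).neighborSet c).ncard = 3) ∧
    IsArcTransitive (quotGraph (biCayley G S) N) ∧
    ∃ T : Set ((biTrans G).range ⧸ N.subgroupOf (biTrans G).range),
      Nonempty (quotGraph (biCayley G S) N ≃g
        biCayley ((biTrans G).range ⧸ N.subgroupOf (biTrans G).range) T) := by
  have hpairs : ∀ s ∈ S, ∀ t ∈ S, biTrans G (t⁻¹ * s) ∈ N → s = t :=
    pairs S hS hconn harc hNG hne hnorm
  refine ⟨?_, conn_quot S hconn hNG, cubic S hS hNG hnorm hpairs, arc_quot S harc hnorm,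
    iso_exists S hNG hnorm⟩
  intro a ha
  exact ⟨part1 S hconn hNG hnorm hpairs ha, fun haN v => ⟨a, haN, rfl⟩⟩
end

section
/- Let G be a finite group, S ⊆ G, Γ = BCay(G,S), and let A⁺ be the subgroup of Aut(Γ) preserving the bipartition class G × {0} setwise. Suppose A_{(1,0)} = A_{(1,1)} (equal vertex stabilizers of (1_G,0) and (1_G,1)) and that there is τ ∈ Aut(Γ) swapping the classes and normalizing Ĝ, with orbits of size 2 of the form {(x,0),(x,1)}. Then the induced action of A⁺ on G via the block system {{(x,0),(x,1)} : x ∈ G} is faithful, and its image equals Aut(Cay(G,S)). -/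
lemma biTrans_mem {G : Type*} [Group G] (S : Set G) (g : G) :
    biTrans G g ∈ graphAut (biCayley G S) := by
  intro a b
  simp only [biCayley, biTrans, graphAut, Equiv.coe_fn_mk, MonoidHom.coe_mk, OneHom.coe_mk]
  constructor <;> rintro (⟨h1,h2,h3⟩|⟨h1,h2,h3⟩)
  · exact Or.inl ⟨h1, h2, by simpa [mul_assoc] using h3⟩
  · exact Or.inr ⟨h1, h2, by simpa [mul_assoc] using h3⟩
  · exact Or.inl ⟨h1, h2, by simpa [mul_assoc] using h3⟩
  · exact Or.inr ⟨h1, h2, by simpa [mul_assoc] using h3⟩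

theorem stmt_18 {G : Type*} [Group G] [Fintype G] (S : Set G)
    (hstab : ∀ f ∈ graphAut (biCayley G S),
      (f ((1 : G), false) = ((1 : G), false) ↔ f ((1 : G), true) = ((1 : G), true)))
    (τ : Equiv.Perm (G × Bool)) (hτA : τ ∈ graphAut (biCayley G S))
    (hτnorm : ∀ a : G, ∃ b : G, τ * biTrans G a * τ⁻¹ = biTrans G b)
    (hτswap : ∀ x : G, τ (x, false) = (x, true) ∧ τ (x, true) = (x, false)) :
    (∀ σ ∈ graphAut (biCayley G S), (∀ x : G, (σ (x, false)).2 = false) →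
      ∃ ρ ∈ cayAut G S, ∀ x : G, σ (x, false) = (ρ x, false) ∧ σ (x, true) = (ρ x, true)) ∧
    (∀ σ ∈ graphAut (biCayley G S), ∀ σ' ∈ graphAut (biCayley G S),
      (∀ x : G, (σ (x, false)).2 = false) → (∀ x : G, (σ' (x, false)).2 = false) →
      (∀ x : G, (σ (x, false)).1 = (σ' (x, false)).1) → σ = σ') ∧
    (∀ ρ ∈ cayAut G S, ∃ σ ∈ graphAut (biCayley G S),
      ∀ x : G, σ (x, false) = (ρ x, false) ∧ σ (x, true) = (ρ x, true)) := by
  have key : ∀ σ ∈ graphAut (biCayley G S), (∀ x : G, (σ (x, false)).2 = false) →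
      ∃ ρ ∈ cayAut G S, ∀ x : G, σ (x, false) = (ρ x, false) ∧ σ (x, true) = (ρ x, true) := by
    intro σ hσ hpres
    set f : G → G := fun x => (σ (x, false)).1 with hf
    have hσf : ∀ x, σ (x, false) = (f x, false) := by
      intro x
      exact Prod.ext rfl (hpres x)
    have finj : Function.Injective f := by
      intro x y hxy
      have : σ (x, false) = σ (y, false) := by rw [hσf, hσf, hxy]
      exact (Prod.ext_iff.1 (σ.injective this)).1
    have fbij : Function.Bijective f := Finite.injective_iff_bijective.1 finj
    have htrue : ∀ x, σ (x, true) = (f x, true) := by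
      intro x
      -- second coordinate is true
      have h2 : (σ (x, true)).2 = true := by
        by_contra h
        have h2 : (σ (x, true)).2 = false := by simpa using h
        obtain ⟨y, hy⟩ := fbij.2 (σ (x, true)).1
        have : σ (y, false) = σ (x, true) := by
          rw [hσf, hy]; exact Prod.ext rfl h2.symm
        have := σ.injective this
        simp at this
      set g : G := (σ (x, true)).1 with hg
      have hσt : σ (x, true) = (g, true) := Prod.ext rfl h2
      -- composed automorphism fixing (1,false)
      set γ : Equiv.Perm (G × Bool) := biTrans G (f x) * σ * (biTrans G x)⁻¹ with hγ
      have hγA : γ ∈ graphAut (biCayley G S) :=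
        mul_mem (mul_mem (biTrans_mem S (f x)) hσ) (inv_mem (biTrans_mem S x))
      have hinv : ∀ v : G × Bool, (biTrans G x)⁻¹ v = (v.1 * x, v.2) := by
        intro v
        rw [← map_inv]
        simp [biTrans]
      have hγfix : γ ((1 : G), false) = ((1 : G), false) := by
        show biTrans G (f x) (σ ((biTrans G x)⁻¹ (1, false))) = (1, false)
        rw [hinv]
        simp only [one_mul]
        rw [hσf]
        simp [biTrans]
      have := (hstab γ hγA).1 hγfix
      have h1 : biTrans G (f x) (σ ((biTrans G x)⁻¹ (1, true))) = ((1 : G), true) := this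
      rw [hinv] at h1
      simp only [one_mul] at h1
      rw [hσt] at h1
      simp only [biTrans, Equiv.coe_fn_mk, MonoidHom.coe_mk, OneHom.coe_mk, Prod.mk.injEq] at h1
      rw [hσt, mul_inv_eq_one.1 h1.1]
    refine ⟨Equiv.ofBijective f fbij, ?_, fun x => ⟨hσf x, htrue x⟩⟩
    intro x y
    have := hσ (x, false) (y, true)
    rw [hσf, htrue] at this
    simpa [biCayley, cayAdj] using this
  refine ⟨key, ?_, ?_⟩
  · intro σ hσ σ' hσ' hp hp' hagree
    obtain ⟨ρ, hρ, hform⟩ := key σ hσ hp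
    obtain ⟨ρ', hρ', hform'⟩ := key σ' hσ' hp'
    have hρeq : ∀ x, (ρ : Equiv.Perm G) x = ρ' x := by
      intro x
      have := hagree x
      rw [(hform x).1, (hform' x).1] at this
      exact this
    apply Equiv.ext
    rintro ⟨x, b⟩
    cases b
    · rw [(hform x).1, (hform' x).1, hρeq]
    · rw [(hform x).2, (hform' x).2, hρeq]
  · intro ρ hρ
    refine ⟨(ρ : Equiv.Perm G).prodCongr (Equiv.refl Bool), ?_, fun x => ⟨rfl, rfl⟩⟩
    intro a b
    have h1 := hρ a.1 b.1
    have h2 := hρ b.1 a.1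
    simp only [cayAdj] at h1 h2
    simp only [biCayley, Equiv.prodCongr_apply, Equiv.coe_refl, Prod.map]
    constructor <;> rintro (⟨x1,x2,x3⟩|⟨x1,x2,x3⟩)
    · exact Or.inl ⟨x1, x2, h1.1 x3⟩
    · exact Or.inr ⟨x1, x2, h2.1 x3⟩
    · exact Or.inl ⟨x1, x2, h1.2 x3⟩
    · exact Or.inr ⟨x1, x2, h2.2 x3⟩
end

section
/- Let G be a finite group, S, T ⊆ G with BCay(G,S) ≅ BCay(G,T), and suppose there exists an isomorphism φ from BCay(G,S) to BCay(G,T) fixing the vertex (1_G, 0) and mapping G × {0} onto itself, and suppose moreover φ conjugates Ĝ to itself (φ normalizes Ĝ). Then T = g·S^α for some g ∈ G and α ∈ Aut(G). -/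
theorem stmt_19 {G : Type*} [Group G] [Fintype G] (S T : Set G)
    (φ : Equiv.Perm (G × Bool))
    (hiso : ∀ v w : G × Bool, (biCayley G S).Adj v w ↔ (biCayley G T).Adj (φ v) (φ w))
    (hfix : φ ((1 : G), false) = ((1 : G), false))
    (hclass : ∀ x : G, (φ (x, false)).2 = false)
    (hnorm : ∀ a : G, ∃ b : G, φ * biTrans G a * φ⁻¹ = biTrans G b) :
    ∃ (g : G) (α : G ≃* G), T = (fun s => g * α s) '' S := by
  classical
  set f : G → G := fun x => (φ (x, false)).1 with hfdef
  have hφf : ∀ x, φ (x, false) = (f x, false) := fun x => Prod.ext rfl (hclass x)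
  have hfinj : Function.Injective f := by
    intro a b hab
    have h2 : φ (a, false) = φ (b, false) := by rw [hφf a, hφf b, hab]
    exact (Prod.ext_iff.mp (φ.injective h2)).1
  have hfsurj : Function.Surjective f := Finite.surjective_of_injective hfinj
  have hclass2 : ∀ x : G, (φ (x, true)).2 = true := by
    intro x
    by_contra hcon
    have h' : (φ (x, true)).2 = false := by simpa using hcon
    obtain ⟨y, hy⟩ := hfsurj (φ (x, true)).1
    have heq : φ (y, false) = φ (x, true) := by
      rw [hφf]; exact Prod.ext hy (h'.symm)
    have := φ.injective heq
    simp at this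
  set h : G → G := fun x => (φ (x, true)).1 with hhdef
  have hφh : ∀ x, φ (x, true) = (h x, true) := fun x => Prod.ext rfl (hclass2 x)
  -- normalizer: φ ∘ biTrans a = biTrans b ∘ φ pointwise
  have hkey : ∀ a : G, ∃ b : G, ∀ v : G × Bool,
      φ (biTrans G a v) = biTrans G b (φ v) := by
    intro a
    obtain ⟨b, hb⟩ := hnorm a
    refine ⟨b, fun v => ?_⟩
    have := congrFun (congrArg (fun (e : Equiv.Perm (G × Bool)) => (e : G × Bool → G × Bool)) hb) (φ v)
    simpa [Equiv.Perm.mul_apply] using this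
  have hbiT : ∀ (a : G) (v : G × Bool), biTrans G a v = (v.1 * a⁻¹, v.2) := by
    intro a v; rfl
  have hf1 : f 1 = 1 := by
    have := hφf 1
    rw [hfix] at this
    exact ((Prod.ext_iff.mp this).1).symm
  -- multiplicativity of f, and relation for h
  have hmulrel : ∀ a x : G, f (x * a⁻¹) = f x * f a⁻¹ ∧ h (x * a⁻¹) = h x * f a⁻¹ := by
    intro a x
    obtain ⟨b, hb⟩ := hkey a
    have hb1 : f a⁻¹ = b⁻¹ := by
      have := hb (1, false)
      rw [hbiT, hφf, hbiT, hφf] at this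
      have := (Prod.ext_iff.mp this).1
      simpa [hf1] using this
    constructor
    · have := hb (x, false)
      rw [hbiT, hφf, hbiT, hφf] at this
      have := (Prod.ext_iff.mp this).1
      simpa [hb1] using this
    · have := hb (x, true)
      rw [hbiT, hφh, hbiT, hφh] at this
      have := (Prod.ext_iff.mp this).1
      simpa [hb1] using this
  have hfmul : ∀ x y : G, f (x * y) = f x * f y := by
    intro x y
    have := (hmulrel y⁻¹ x).1
    simpa using this
  have hhrel : ∀ x : G, h x = h 1 * f x := by
    intro x
    have := (hmulrel x⁻¹ 1).2
    simpa using this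
  let α : G ≃* G := { Equiv.ofBijective f ⟨hfinj, hfsurj⟩ with map_mul' := hfmul }
  have hαf : ∀ x, α x = f x := fun x => rfl
  refine ⟨h 1, α, ?_⟩
  have hmem : ∀ s : G, s ∈ S ↔ h 1 * f s ∈ T := by
    intro s
    have hadjS : (biCayley G S).Adj (1, false) (s, true) ↔ s ∈ S := by
      simp [biCayley]
    have hadjT : (biCayley G T).Adj (φ (1, false)) (φ (s, true)) ↔ h 1 * f s ∈ T := by
      rw [hfix, hφh, hhrel]
      simp [biCayley]
    rw [← hadjS, hiso, hadjT]
  ext t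
  constructor
  · intro ht
    obtain ⟨s, hs⟩ := hfsurj ((h 1)⁻¹ * t)
    refine ⟨s, (hmem s).mpr ?_, ?_⟩
    · rw [hs]; simpa using ht
    · simp [hαf, hs]
  · rintro ⟨s, hsS, rfl⟩
    exact (hmem s).mp hsS
end
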